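/- Let X be a real random variable with E|X|⁴ < ∞ and let ε > 0. Then the series Σ_{m=1}^∞ 2^{2m} · P(|X| ≥ ε·2^{(m-1)/2}) converges; in fact Σ_{m=1}^∞ 2^{2m} · P(ε·2^{(m-1)/2} ≤ |X| < ε·2^{m/2}) ≤ 16 ε^{-4} E|X|⁴. -/

import Mathlib

open MeasureTheory ProbabilityTheory Filter ENNReal

lemma exists_dyadic_band {ε c : ℝ} (hε : 0 < ε) (m : ℕ)
    (h : ε * (2:ℝ) ^ ((m:ℝ)/2) ≤ c) :
    ∃ k : ℕ, m ≤ k ∧ ε * (2:ℝ) ^ ((k:ℝ)/2) ≤ c ∧ c < ε * (2:ℝ) ^ (((k:ℝ)+1)/2) := by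
  have hc : 0 < c := lt_of_lt_of_le (by positivity) h
  have hce : (2:ℝ) ^ ((m:ℝ)/2) ≤ c / ε := (le_div_iff₀ hε).2 (by linarith [h])
  set t := Real.logb 2 (c / ε) with ht
  have htm : (m:ℝ)/2 ≤ t :=
    (Real.le_logb_iff_rpow_le one_lt_two (by positivity)).2 hce
  set k := ⌊2 * t⌋₊ with hk
  have hmk : m ≤ k := Nat.le_floor (by linarith)
  have hm0 : (0:ℝ) ≤ (m:ℝ) := Nat.cast_nonneg m
  have ht0 : 0 ≤ 2 * t := by linarith
  have hk1 : (k:ℝ) ≤ 2*t := Nat.floor_le ht0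
  have hk2 : 2*t < (k:ℝ)+1 := Nat.lt_floor_add_one _
  have hpow : (2:ℝ) ^ t = c / ε := Real.rpow_logb two_pos (by norm_num) (by positivity)
  refine ⟨k, hmk, ?_, ?_⟩
  · have h1 : (2:ℝ)^((k:ℝ)/2) ≤ 2^t :=
      Real.rpow_le_rpow_of_exponent_le one_le_two (by linarith)
    have := mul_le_mul_of_nonneg_left h1 hε.le
    rw [hpow] at this
    calc ε * 2^((k:ℝ)/2) ≤ ε * (c/ε) := this
      _ = c := by field_simp
  · have h1 : (2:ℝ)^t < 2^(((k:ℝ)+1)/2) :=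
      Real.rpow_lt_rpow_of_exponent_lt one_lt_two (by linarith)
    have := mul_lt_mul_of_pos_left h1 hε
    rw [hpow] at this
    calc c = ε * (c/ε) := by field_simp
      _ < ε * 2^(((k:ℝ)+1)/2) := this

lemma geom_sum_pow_four_le (n : ℕ) :
    ∑ m ∈ Finset.range n, (4:ℝ≥0∞)^(m+1) ≤ 4^(n+1) := by
  induction n with
  | zero => simp
  | succ n ih =>
    rw [Finset.sum_range_succ]
    calc ∑ m ∈ Finset.range n, (4:ℝ≥0∞)^(m+1) + 4^(n+1) ≤ 4^(n+1) + 4^(n+1) :=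
          add_le_add_left ih _
      _ ≤ 4^(n+2) := by
          rw [pow_succ (4:ℝ≥0∞) (n+1)]
          calc (4:ℝ≥0∞)^(n+1) + 4^(n+1) = 4^(n+1) * 2 := by ring
            _ ≤ 4^(n+1) * 4 := by gcongr <;> norm_num

theorem fourth_moment_dyadic_tail_sum
    {Ω : Type*} [MeasureSpace Ω] [IsProbabilityMeasure (ℙ : Measure Ω)]
    (X : Ω → ℝ) (hXmeas : Measurable X)
    (hX4 : Integrable (fun ω => |X ω| ^ 4) ℙ)
    (ε : ℝ) (hε : 0 < ε) :
    Summable (fun m : ℕ => (2 : ℝ) ^ (2 * (m + 1)) *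
        ((ℙ : Measure Ω) {ω : Ω | ε * (2 : ℝ) ^ ((m : ℝ) / 2) ≤ |X ω|}).toReal) ∧
    ∑' m : ℕ, (2 : ℝ) ^ (2 * (m + 1)) *
        ((ℙ : Measure Ω) {ω : Ω | ε * (2 : ℝ) ^ ((m : ℝ) / 2) ≤ |X ω| ∧
                |X ω| < ε * (2 : ℝ) ^ (((m : ℝ) + 1) / 2)}).toReal
      ≤ 16 / ε ^ 4 * ∫ ω, |X ω| ^ 4 ∂(ℙ : Measure Ω) := by
  set μ : Measure Ω := ℙ with hμ
  set B : ℕ → Set Ω := fun k =>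
    {ω : Ω | ε * (2:ℝ) ^ ((k:ℝ)/2) ≤ |X ω| ∧ |X ω| < ε * (2:ℝ) ^ (((k:ℝ)+1)/2)} with hB
  set f : Ω → ℝ≥0∞ := fun ω => ENNReal.ofReal (|X ω|^4) with hf
  have hfmeas : Measurable f := (hXmeas.abs.pow_const 4).ennreal_ofReal
  have hBmeas : ∀ k, MeasurableSet (B k) := by
    intro k
    have : B k = (fun ω => |X ω|) ⁻¹' (Set.Ico (ε * 2^((k:ℝ)/2)) (ε * 2^(((k:ℝ)+1)/2))) := rfl
    rw [this]
    exact hXmeas.abs measurableSet_Ico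
  -- monotonicity of dyadic levels
  have hlev : ∀ {i j : ℕ}, i ≤ j → ε * (2:ℝ)^((i:ℝ)/2) ≤ ε * 2^((j:ℝ)/2) := by
    intro i j hij
    have : ((i:ℝ))/2 ≤ (j:ℝ)/2 := by
      have : (i:ℝ) ≤ j := Nat.cast_le.2 hij
      linarith
    exact mul_le_mul_of_nonneg_left (Real.rpow_le_rpow_of_exponent_le one_le_two this) hε.le
  have hBdisj : Pairwise (Function.onFun Disjoint B) := by
    have key : ∀ i j : ℕ, i < j → Disjoint (B i) (B j) := by
      intro i j hij
      rw [Set.disjoint_left]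
      rintro ω ⟨-, hi2⟩ ⟨hj1, -⟩
      have h1 : ε * (2:ℝ)^(((i:ℝ)+1)/2) ≤ ε * 2^((j:ℝ)/2) := by
        have : ((i:ℝ)+1)/2 ≤ (j:ℝ)/2 := by
          have : (i:ℝ)+1 ≤ j := by exact_mod_cast hij
          linarith
        exact mul_le_mul_of_nonneg_left
          (Real.rpow_le_rpow_of_exponent_le one_le_two this) hε.le
      linarith
    intro i j hij
    rcases lt_or_gt_of_ne hij with h | h
    · exact key i j h
    · exact (key j i h).symm
  -- tail sets as unions of bands
  have hTail : ∀ m : ℕ, {ω : Ω | ε * (2:ℝ) ^ ((m:ℝ)/2) ≤ |X ω|} = ⋃ k ∈ Set.Ici m, B k := by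
    intro m
    ext ω
    simp only [Set.mem_setOf_eq, Set.mem_iUnion, Set.mem_Ici]
    constructor
    · intro h
      obtain ⟨k, hk, h1, h2⟩ := exists_dyadic_band hε m h
      exact ⟨k, hk, h1, h2⟩
    · rintro ⟨k, hk, h1, -⟩
      exact le_trans (hlev hk) h1
  have hTailm : ∀ m : ℕ, μ {ω : Ω | ε * (2:ℝ) ^ ((m:ℝ)/2) ≤ |X ω|}
      = ∑' k : ℕ, Set.indicator (Set.Ici m) (fun k => μ (B k)) k := by
    intro m
    rw [hTail m, measure_biUnion (Set.to_countable _)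
      (hBdisj.pairwiseDisjoint _) (fun k _ => hBmeas k)]
    exact tsum_subtype (Set.Ici m) (fun k => μ (B k))
  -- finite fourth moment as a lintegral
  have hI : ∫⁻ ω, f ω ∂μ ≠ ∞ := by
    have h1 := hX4.hasFiniteIntegral
    rw [HasFiniteIntegral] at h1
    have : ∫⁻ ω, f ω ∂μ = ∫⁻ ω, (‖|X ω|^4‖₊ : ℝ≥0∞) ∂μ := by
      apply lintegral_congr
      intro ω
      rw [hf]
      exact (Real.enorm_eq_ofReal (by positivity)).symm
    rw [this]
    exact h1.ne
  -- band estimate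
  have hband : ∀ k : ℕ, ENNReal.ofReal (ε^4) * ((4:ℝ≥0∞)^k * μ (B k))
      ≤ ∫⁻ ω in B k, f ω ∂μ := by
    intro k
    have hconst : ∀ ω ∈ B k, ENNReal.ofReal (ε^4 * 4^k) ≤ f ω := by
      rintro ω ⟨h1, -⟩
      apply ENNReal.ofReal_le_ofReal
      have hx : ε * (2:ℝ)^((k:ℝ)/2) ≤ |X ω| := h1
      have hnn : (0:ℝ) ≤ ε * 2^((k:ℝ)/2) := by positivity
      have h4 : (ε * (2:ℝ)^((k:ℝ)/2))^4 ≤ |X ω|^4 := by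
        exact pow_le_pow_left₀ hnn hx 4
      have hid : (ε * (2:ℝ)^((k:ℝ)/2))^4 = ε^4 * 4^k := by
        rw [mul_pow]
        congr 1
        rw [← Real.rpow_natCast ((2:ℝ)^((k:ℝ)/2)) 4, ← Real.rpow_mul (by norm_num)]
        rw [show ((k:ℝ)/2 * (4:ℕ) : ℝ) = ((2*k : ℕ) : ℝ) by push_cast; ring]
        rw [Real.rpow_natCast, pow_mul]
        norm_num
      linarith
    have h4k : ENNReal.ofReal ((4:ℝ)^k) = (4:ℝ≥0∞)^k := by
      rw [ENNReal.ofReal_pow (by norm_num : (0:ℝ) ≤ 4)]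
      simp
    have hO : ENNReal.ofReal (ε^4 * 4^k) = ENNReal.ofReal (ε^4) * (4:ℝ≥0∞)^k := by
      rw [ENNReal.ofReal_mul (by positivity : (0:ℝ) ≤ ε^4), h4k]
    calc ENNReal.ofReal (ε^4) * ((4:ℝ≥0∞)^k * μ (B k))
        = ENNReal.ofReal (ε^4 * 4^k) * μ (B k) := by rw [hO]; ring
      _ = ∫⁻ _ in B k, ENNReal.ofReal (ε^4 * 4^k) ∂μ := by
          rw [setLIntegral_const]
      _ ≤ ∫⁻ ω in B k, f ω ∂μ := setLIntegral_mono hfmeas hconst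
  have hbandsum : ∑' k : ℕ, ∫⁻ ω in B k, f ω ∂μ ≤ ∫⁻ ω, f ω ∂μ := by
    rw [← lintegral_iUnion hBmeas hBdisj]
    exact setLIntegral_le_lintegral _ _
  have hA : ∑' k : ℕ, (4:ℝ≥0∞)^k * μ (B k) ≤ (∫⁻ ω, f ω ∂μ) / ENNReal.ofReal (ε^4) := by
    rw [ENNReal.le_div_iff_mul_le (Or.inl (by simp [hε, pow_pos])) (Or.inl ENNReal.ofReal_ne_top)]
    calc (∑' k : ℕ, (4:ℝ≥0∞)^k * μ (B k)) * ENNReal.ofReal (ε^4)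
        = ∑' k : ℕ, ENNReal.ofReal (ε^4) * ((4:ℝ≥0∞)^k * μ (B k)) := by
          rw [← ENNReal.tsum_mul_right]
          congr 1; ext k; ring
      _ ≤ ∑' k : ℕ, ∫⁻ ω in B k, f ω ∂μ := ENNReal.tsum_le_tsum hband
      _ ≤ ∫⁻ ω, f ω ∂μ := hbandsum
  have hε4 : ENNReal.ofReal (ε^4) ≠ 0 := (ENNReal.ofReal_pos.2 (by positivity)).ne'
  have hAfin : (∫⁻ ω, f ω ∂μ) / ENNReal.ofReal (ε^4) ≠ ∞ :=
    (ENNReal.div_lt_top hI hε4).ne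
  -- Part 1 : summability
  have hT : ∑' m : ℕ, (4:ℝ≥0∞)^(m+1) * μ {ω : Ω | ε * (2:ℝ) ^ ((m:ℝ)/2) ≤ |X ω|} ≠ ∞ := by
    have hswap : ∑' m : ℕ, (4:ℝ≥0∞)^(m+1) * μ {ω : Ω | ε * (2:ℝ) ^ ((m:ℝ)/2) ≤ |X ω|}
        = ∑' k : ℕ, ∑' m : ℕ, (if m ≤ k then (4:ℝ≥0∞)^(m+1) * μ (B k) else 0) := by
      rw [← ENNReal.tsum_comm]
      congr 1; ext m
      rw [hTailm m, ← ENNReal.tsum_mul_left]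
      congr 1; ext k
      by_cases h : m ≤ k
      · simp [Set.indicator_of_mem, h]
      · simp [Set.indicator_of_notMem, h]
    rw [hswap]
    have hinner : ∀ k : ℕ, ∑' m : ℕ, (if m ≤ k then (4:ℝ≥0∞)^(m+1) * μ (B k) else 0)
        ≤ 16 * ((4:ℝ≥0∞)^k * μ (B k)) := by
      intro k
      have heq : ∑' m : ℕ, (if m ≤ k then (4:ℝ≥0∞)^(m+1) * μ (B k) else 0)
          = ∑ m ∈ Finset.range (k+1), (4:ℝ≥0∞)^(m+1) * μ (B k) := by
        rw [tsum_eq_sum (s := Finset.range (k+1)) (by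
          intro m hm
          rw [Finset.mem_range, Nat.lt_add_one_iff] at hm
          simp [hm])]
        exact Finset.sum_congr rfl (fun m hm => by
          rw [Finset.mem_range, Nat.lt_add_one_iff] at hm
          simp [hm])
      rw [heq, ← Finset.sum_mul]
      calc (∑ m ∈ Finset.range (k+1), (4:ℝ≥0∞)^(m+1)) * μ (B k)
          ≤ 4^(k+2) * μ (B k) := by
            gcongr
            exact geom_sum_pow_four_le (k+1)
        _ = 16 * ((4:ℝ≥0∞)^k * μ (B k)) := by ring
    apply ne_top_of_le_ne_top (ENNReal.mul_ne_top (show (16:ℝ≥0∞) ≠ ⊤ by norm_num) hAfin)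
    calc ∑' k : ℕ, ∑' m : ℕ, (if m ≤ k then (4:ℝ≥0∞)^(m+1) * μ (B k) else 0)
        ≤ ∑' k : ℕ, 16 * ((4:ℝ≥0∞)^k * μ (B k)) := ENNReal.tsum_le_tsum hinner
      _ = 16 * ∑' k : ℕ, (4:ℝ≥0∞)^k * μ (B k) := ENNReal.tsum_mul_left
      _ ≤ 16 * ((∫⁻ ω, f ω ∂μ) / ENNReal.ofReal (ε^4)) := by gcongr
  have hterm_eq : ∀ m : ℕ, (2:ℝ)^(2*(m+1)) *
      (μ {ω : Ω | ε * (2:ℝ) ^ ((m:ℝ)/2) ≤ |X ω|}).toReal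
      = ((4:ℝ≥0∞)^(m+1) * μ {ω : Ω | ε * (2:ℝ) ^ ((m:ℝ)/2) ≤ |X ω|}).toReal := by
    intro m
    rw [ENNReal.toReal_mul, ENNReal.toReal_pow]
    norm_num [pow_mul]
  constructor
  · have := ENNReal.summable_toReal hT
    apply Summable.congr this
    intro m
    exact (hterm_eq m).symm
  -- Part 2
  · have hJ : (0:ℝ) ≤ ∫ ω, |X ω| ^ 4 ∂μ := integral_nonneg (fun ω => by positivity)
    have hIJ : ∫⁻ ω, f ω ∂μ = ENNReal.ofReal (∫ ω, |X ω| ^ 4 ∂μ) := by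
      rw [← MeasureTheory.ofReal_integral_eq_lintegral_ofReal hX4
        (Filter.Eventually.of_forall (fun ω => by positivity))]
    have hU : ∑' m : ℕ, (4:ℝ≥0∞)^(m+1) * μ (B m)
        ≤ ENNReal.ofReal (16 / ε^4 * ∫ ω, |X ω| ^ 4 ∂μ) := by
      calc ∑' m : ℕ, (4:ℝ≥0∞)^(m+1) * μ (B m)
          = 4 * ∑' m : ℕ, (4:ℝ≥0∞)^m * μ (B m) := by
            rw [← ENNReal.tsum_mul_left]
            congr 1; ext m; ring
        _ ≤ 4 * ((∫⁻ ω, f ω ∂μ) / ENNReal.ofReal (ε^4)) := by gcongr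
        _ = 4 * (ENNReal.ofReal (∫ ω, |X ω| ^ 4 ∂μ) / ENNReal.ofReal (ε^4)) := by rw [hIJ]
        _ = ENNReal.ofReal (4 * ((∫ ω, |X ω| ^ 4 ∂μ) / ε^4)) := by
            rw [ENNReal.ofReal_mul (by norm_num), ← ENNReal.ofReal_div_of_pos (by positivity)]
            norm_num
        _ ≤ ENNReal.ofReal (16 / ε^4 * ∫ ω, |X ω| ^ 4 ∂μ) := by
            apply ENNReal.ofReal_le_ofReal
            have hx : (0:ℝ) ≤ (∫ ω, |X ω| ^ 4 ∂μ) / ε^4 := by positivity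
            calc 4 * ((∫ ω, |X ω| ^ 4 ∂μ) / ε^4)
                ≤ 16 * ((∫ ω, |X ω| ^ 4 ∂μ) / ε^4) :=
                  mul_le_mul_of_nonneg_right (by norm_num) hx
              _ = 16 / ε^4 * ∫ ω, |X ω| ^ 4 ∂μ := by ring
    have hsum2 : ∑' m : ℕ, (2:ℝ)^(2*(m+1)) * (μ (B m)).toReal
        = (∑' m : ℕ, (4:ℝ≥0∞)^(m+1) * μ (B m)).toReal := by
      rw [ENNReal.tsum_toReal_eq (fun m => ENNReal.mul_ne_top
        (by simp) (measure_ne_top μ _))]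
      congr 1; ext m
      rw [ENNReal.toReal_mul, ENNReal.toReal_pow]
      norm_num [pow_mul]
    calc ∑' m : ℕ, (2:ℝ)^(2*(m+1)) * (μ (B m)).toReal
        = (∑' m : ℕ, (4:ℝ≥0∞)^(m+1) * μ (B m)).toReal := hsum2
      _ ≤ 16 / ε^4 * ∫ ω, |X ω| ^ 4 ∂μ := ENNReal.toReal_le_of_le_ofReal
          (by positivity) hU
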